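/- arXiv:1603.08828 — 3 statements merged into one kernel-verified Lean document; each statement's English description precedes it below -/
import Mathlib

section
/- Let Y be a solution on an interval (l,u) of dY = a(Y)dB + φ(Y)dt where a > 0 and φ satisfy (1/2)a²a'' + a'φ + (r - φ')a = 0, and suppose f(x) := ∫_c^x 1/a(y) dy is finite for all x ∈ (l,u). Then R := f(Y) satisfies dR = dB + (rR + d)dt for some constant d ∈ ℝ; equivalently, the function y ↦ φ(f⁻¹(y))/a(f⁻¹(y)) - (1/2)a'(f⁻¹(y)) has constant derivative equal to r. -/
open MeasureTheory Real Filter Set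
open Topology

/-- Deterministic core of the reduction to an Ornstein-Uhlenbeck process:
if `a > 0` and `φ` satisfy `(1/2)a²a'' + a'φ + (r-φ')a = 0` on `(l,u)` and
`f(x) = ∫_c^x dy/a(y)`, then the drift `G(y) = φ(f⁻¹(y))/a(f⁻¹(y)) -
(1/2)a'(f⁻¹(y))` of `R = f(Y)` has derivative `r`, i.e. `G(y) = ry + d`. -/
theorem stmt_5 (r l u c : ℝ) (hr : 0 < r) (hlu : l < u)
    (hc : c ∈ Set.Ioo l u)
    (a φ : ℝ → ℝ)
    (ha_pos : ∀ x ∈ Set.Ioo l u, 0 < a x)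
    (ha : ContDiffOn ℝ 2 a (Set.Ioo l u))
    (hφ : ContDiffOn ℝ 1 φ (Set.Ioo l u))
    (hode : ∀ x ∈ Set.Ioo l u,
      (1 / 2) * (a x) ^ 2 * deriv (deriv a) x + deriv a x * φ x
        + (r - deriv φ x) * a x = 0)
    (f : ℝ → ℝ) (hf : ∀ x ∈ Set.Ioo l u, f x = ∫ y in c..x, 1 / a y)
    (finv : ℝ → ℝ) (hfinv : ∀ x ∈ Set.Ioo l u, finv (f x) = x) :
    ∀ x ∈ Set.Ioo l u,
      HasDerivAt (fun y => φ (finv y) / a (finv y) - (1 / 2) * deriv a (finv y))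
        r (f x) := by
  have hopen : IsOpen (Set.Ioo l u) := isOpen_Ioo
  have hacont : ContinuousOn a (Set.Ioo l u) := ha.continuousOn
  have hinvcont : ContinuousOn (fun y => 1 / a y) (Set.Ioo l u) :=
    continuousOn_const.div hacont (fun z hz => (ha_pos z hz).ne')
  -- derivative of f
  have hfderiv : ∀ z ∈ Set.Ioo l u, HasDerivAt f (1 / a z) z := by
    intro z hz
    have hint : HasDerivAt (fun x => ∫ y in c..x, 1 / a y) (1 / a z) z := by
      apply intervalIntegral.integral_hasDerivAt_right
      · exact (hinvcont.mono (Set.ordConnected_Ioo.uIcc_subset hc hz)).intervalIntegrable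
      · exact hinvcont.stronglyMeasurableAtFilter hopen z hz
      · exact hinvcont.continuousAt (hopen.mem_nhds hz)
    apply hint.congr_of_eventuallyEq
    filter_upwards [hopen.mem_nhds hz] with w hw using (hf w hw)
  have hfc : ContinuousOn f (Set.Ioo l u) := fun z hz =>
    ((hfderiv z hz).continuousAt.continuousWithinAt)
  have hmono : StrictMonoOn f (Set.Ioo l u) := by
    apply strictMonoOn_of_deriv_pos (convex_Ioo l u) hfc
    intro z hz
    rw [interior_Ioo] at hz
    rw [(hfderiv z hz).deriv]
    exact div_pos one_pos (ha_pos z hz)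
  intro x hx
  obtain ⟨hlx, hxu⟩ := hx
  obtain ⟨x₁, hx₁, hx₁x⟩ := exists_between hlx
  obtain ⟨x₂, hxx₂, hx₂⟩ := exists_between hxu
  have hx : x ∈ Set.Ioo l u := ⟨hlx, hxu⟩
  have hx₁m : x₁ ∈ Set.Ioo l u := ⟨hx₁, hx₁x.trans hxu⟩
  have hx₂m : x₂ ∈ Set.Ioo l u := ⟨hlx.trans hxx₂, hx₂⟩
  have hIcc : Set.Icc x₁ x₂ ⊆ Set.Ioo l u := fun z hz => ⟨hx₁.trans_le hz.1, hz.2.trans_lt hx₂⟩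
  -- surjectivity onto Icc (f x₁) (f x₂)
  have hsurj : Set.Icc (f x₁) (f x₂) ⊆ f '' Set.Icc x₁ x₂ :=
    intermediate_value_Icc (hx₁x.trans hxx₂).le (hfc.mono hIcc)
  set T := Set.Ioo (f x₁) (f x₂) with hT
  have hfxT : f x ∈ T := ⟨hmono hx₁m hx hx₁x, hmono hx hx₂m hxx₂⟩
  have hTnhds : T ∈ 𝓝 (f x) := isOpen_Ioo.mem_nhds hfxT
  -- for y ∈ T, there is z ∈ Icc x₁ x₂ with f z = y
  have hpre : ∀ y ∈ T, finv y ∈ Set.Icc x₁ x₂ ∧ f (finv y) = y := by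
    intro y hy
    obtain ⟨z, hz, hzy⟩ := hsurj (Set.Ioo_subset_Icc_self hy)
    have : finv y = z := by rw [← hzy, hfinv z (hIcc hz)]
    rw [this, hzy]
    exact ⟨hz, rfl⟩
  have hright : ∀ᶠ y in 𝓝 (f x), f (finv y) = y := by
    filter_upwards [hTnhds] with y hy using (hpre y hy).2
  -- finv is strictly monotone on T
  have hinv_mono : StrictMonoOn finv T := by
    intro y₁ hy₁ y₂ hy₂ h12
    obtain ⟨hm₁, he₁⟩ := hpre y₁ hy₁
    obtain ⟨hm₂, he₂⟩ := hpre y₂ hy₂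
    by_contra hle
    push_neg at hle
    have := hmono.monotoneOn (hIcc hm₂) (hIcc hm₁) hle
    rw [he₁, he₂] at this
    exact absurd this (not_le.mpr h12)
  -- finv '' T is a nbhd of x = finv (f x)
  have himg : finv '' T ∈ 𝓝 (finv (f x)) := by
    rw [hfinv x hx]
    have : Set.Ioo x₁ x₂ ⊆ finv '' T := by
      intro z hz
      have hzm : z ∈ Set.Ioo l u := hIcc (Set.Ioo_subset_Icc_self hz)
      exact ⟨f z, ⟨hmono hx₁m hzm hz.1, hmono hzm hx₂m hz.2⟩, hfinv z hzm⟩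
    exact Filter.mem_of_superset (isOpen_Ioo.mem_nhds ⟨hx₁x, hxx₂⟩) this
  have hinv_cont : ContinuousAt finv (f x) :=
    hinv_mono.continuousAt_of_image_mem_nhds hTnhds himg
  -- derivative of finv
  have hax : 0 < a x := ha_pos x hx
  have hfinv_deriv : HasDerivAt finv (a x) (f x) := by
    have h := HasDerivAt.of_local_left_inverse hinv_cont
      (by rw [hfinv x hx]; exact hfderiv x hx) (by positivity) hright
    simpa using h
  -- derivatives of a, a', φ at x
  have haK : ContDiffAt ℝ 2 a x := ha.contDiffAt (hopen.mem_nhds hx)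
  have ha'cd : ContDiffOn ℝ 1 (deriv a) (Set.Ioo l u) :=
    ha.deriv_of_isOpen hopen (by norm_num)
  have ha'diff : HasDerivAt (deriv a) (deriv (deriv a) x) x := by
    have := (ha'cd.contDiffAt (hopen.mem_nhds hx)).differentiableAt (by norm_num)
    exact this.hasDerivAt
  have hadiff : HasDerivAt a (deriv a x) x := by
    have := (haK.differentiableAt (by norm_num))
    exact this.hasDerivAt
  have hφdiff : HasDerivAt φ (deriv φ x) x := by
    have := ((hφ.contDiffAt (hopen.mem_nhds hx)).differentiableAt (by norm_num))
    exact this.hasDerivAt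
  -- H has derivative r / a x at x
  have hH : HasDerivAt (fun z => φ z / a z - (1 / 2) * deriv a z) (r / a x) x := by
    have h1 : HasDerivAt (fun z => φ z / a z)
        ((deriv φ x * a x - φ x * deriv a x) / (a x) ^ 2) x :=
      hφdiff.div hadiff hax.ne'
    have h2 : HasDerivAt (fun z => (1 / 2 : ℝ) * deriv a z)
        ((1 / 2) * deriv (deriv a) x) x := ha'diff.const_mul _
    have h : HasDerivAt (fun z => φ z / a z - (1 / 2) * deriv a z) _ x := h1.sub h2
    convert h using 1
    have hode' := hode x hx
    field_simp [hax.ne']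
    nlinarith [hode x hx, sq_nonneg (a x)]
  -- compose
  have hH' : HasDerivAt (fun z => φ z / a z - (1 / 2) * deriv a z) (r / a x) (finv (f x)) := by
    rw [hfinv x hx]; exact hH
  have hcomp := hH'.comp (f x) hfinv_deriv
  have hra : r / a x * a x = r := div_mul_cancel₀ r hax.ne'
  rw [hra] at hcomp
  exact hcomp
end

section
/- If h(t,x) = v and a ≡ a(x), φ, σ smooth with h three times differentiable in x, then the two conditions a J' = h - v and (1/2)a²J'' + J'φ - rJ = 0 for all v imply the pair of equations (1/2)a²h'' + h'φ = 0 and (1/2)a²a'' + a'φ + (r - φ')a = 0. -/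
open MeasureTheory Real Filter

/-- In the time-homogeneous setting, if for every `v` the value function `J v`
satisfies the first-order condition `a J' = h - v` and the Bellman equation
`(1/2)a²J'' + J'φ - rJ = 0`, then (matching coefficients in `v`) the pricing
rule and the coefficients satisfy `(1/2)a²h'' + h'φ = 0` and
`(1/2)a²a'' + a'φ + (r-φ')a = 0`. -/
theorem stmt_6 (r : ℝ) (hr : 0 < r)
    (a φ h : ℝ → ℝ) (J : ℝ → ℝ → ℝ)
    (ha_pos : ∀ x, 0 < a x)
    (ha : ContDiff ℝ 2 a) (hφ : ContDiff ℝ 1 φ) (hh : ContDiff ℝ 3 h)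
    (hJ : ∀ v, ContDiff ℝ 2 (J v))
    (hfoc : ∀ v x, deriv (J v) x = (h x - v) / a x)
    (hbellman : ∀ v x, (1 / 2) * (a x) ^ 2 * deriv (deriv (J v)) x
      + deriv (J v) x * φ x - r * J v x = 0) :
    (∀ x, (1 / 2) * (a x) ^ 2 * deriv (deriv h) x + deriv h x * φ x = 0) ∧
    (∀ x, (1 / 2) * (a x) ^ 2 * deriv (deriv a) x + deriv a x * φ x
      + (r - deriv φ x) * a x = 0) := by
  have hane : ∀ x, a x ≠ 0 := fun x => (ha_pos x).ne'
  have ha2 : ContDiff ℝ (1+1) a := by norm_num at ha ⊢; exact ha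
  have hh3 : ContDiff ℝ (2+1) h := by norm_num at hh ⊢; exact hh
  have hda : ContDiff ℝ 1 (deriv a) := (contDiff_succ_iff_deriv.mp ha2).2.2
  have hdh : ContDiff ℝ 2 (deriv h) := (contDiff_succ_iff_deriv.mp hh3).2.2
  have Ha : ∀ x, HasDerivAt a (deriv a x) x :=
    fun x => (ha.differentiable two_ne_zero x).hasDerivAt
  have Ha' : ∀ x, HasDerivAt (deriv a) (deriv (deriv a) x) x :=
    fun x => (hda.differentiable one_ne_zero x).hasDerivAt
  have Hh : ∀ x, HasDerivAt h (deriv h x) x :=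
    fun x => (hh.differentiable (by norm_num) x).hasDerivAt
  have Hh' : ∀ x, HasDerivAt (deriv h) (deriv (deriv h) x) x :=
    fun x => (hdh.differentiable two_ne_zero x).hasDerivAt
  have Hφ : ∀ x, HasDerivAt φ (deriv φ x) x :=
    fun x => (hφ.differentiable one_ne_zero x).hasDerivAt
  have hJ' : ∀ v, deriv (J v) = fun x => (h x - v) / a x := fun v => funext (hfoc v)
  have hJ'' : ∀ v x, deriv (deriv (J v)) x
      = (deriv h x * a x - (h x - v) * deriv a x) / (a x) ^ 2 := by
    intro v x
    rw [hJ' v]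
    have := (((Hh x).sub_const v).div (Ha x) (hane x))
    exact this.deriv
  set R : ℝ → ℝ → ℝ := fun v x =>
    (1/2) * (deriv h x * a x - (h x - v) * deriv a x) + (h x - v) * φ x / a x with hR
  have hJR : ∀ v x, J v x = R v x / r := by
    intro v x
    have hb := hbellman v x
    rw [hJ'' v x, hfoc v x] at hb
    have hX : (a x)^2 * ((deriv h x * a x - (h x - v) * deriv a x) / (a x)^2)
        = deriv h x * a x - (h x - v) * deriv a x := by
      rw [mul_div_assoc', mul_div_cancel_left₀ _ (pow_ne_zero 2 (hane x))]
    rw [hR, eq_div_iff hr.ne']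
    linear_combination (1/2 : ℝ) * hX - hb
  have hDR : ∀ v x, deriv (R v) x =
      (1/2) * ((deriv (deriv h) x * a x + deriv h x * deriv a x)
        - (deriv h x * deriv a x + (h x - v) * deriv (deriv a) x))
      + (((deriv h x * φ x + (h x - v) * deriv φ x) * a x
          - (h x - v) * φ x * deriv a x) / (a x) ^ 2) := by
    intro v x
    have H : HasDerivAt (R v)
        ((1/2) * ((deriv (deriv h) x * a x + deriv h x * deriv a x)
          - (deriv h x * deriv a x + (h x - v) * deriv (deriv a) x))
        + (((deriv h x * φ x + (h x - v) * deriv φ x) * a x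
            - (h x - v) * φ x * deriv a x) / (a x) ^ 2)) x := by
      have h1 := (((Hh' x).mul (Ha x)).sub (((Hh x).sub_const v).mul (Ha' x))).const_mul (1/2)
      have h2 := ((((Hh x).sub_const v).mul (Hφ x)).div (Ha x) (hane x))
      exact (h1.add h2).congr_deriv (by simp only [Pi.mul_apply])
    exact H.deriv
  have key : ∀ v x, 2 * r * (h x - v) * (a x) ^ 2 =
      (deriv (deriv h) x * a x - (h x - v) * deriv (deriv a) x) * (a x) ^ 3
      + 2 * ((deriv h x * φ x + (h x - v) * deriv φ x) * a x
          - (h x - v) * φ x * deriv a x) * a x := by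
    intro v x
    have hfun : J v = fun y => R v y / r := funext fun y => hJR v y
    have hDJ : deriv (J v) x = deriv (R v) x / r := by
      rw [hfun]; simp [deriv_div_const]
    rw [hfoc v x, hDR v x] at hDJ
    field_simp [hane x, hr.ne'] at hDJ
    linear_combination (a x) * hDJ
  refine ⟨fun x => ?_, fun x => ?_⟩
  · have k1 := key (h x) x
    have h2 : (a x)^2 * (2 * ((1/2) * (a x)^2 * deriv (deriv h) x + deriv h x * φ x)) = 0 := by
      linear_combination -k1
    rcases mul_eq_zero.mp h2 with h3 | h3
    · exact absurd h3 (pow_ne_zero 2 (hane x))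
    · linear_combination (1/2 : ℝ) * h3
  · have k1 := key (h x) x
    have k2 := key (h x - 1) x
    have h2 : a x * (2 * ((1/2) * (a x)^2 * deriv (deriv a) x + deriv a x * φ x
        + (r - deriv φ x) * a x)) = 0 := by
      linear_combination k2 - k1
    rcases mul_eq_zero.mp h2 with h3 | h3
    · exact absurd h3 (hane x)
    · linear_combination (1/2 : ℝ) * h3
end

section
/- Let s(x) be the normal CDF s(x) = sqrt(r/π)∫_{-∞}^x e^{-r(y+d/r)²}dy and define J(x) = ∫_{s⁻¹(v)}^x (s(y)-v)dy for v ∈ {0,1} (interpreting s⁻¹(0) = -∞, s⁻¹(1) = +∞ so that J(x) = ∫_{-∞}^x s(y)dy when v=0 and J(x) = ∫_x^∞ (1-s(y))dy when v=1). Then (A^v J - rJ)(x) = (1_{v=1} s'(x)/s(x) - 1_{v=0} s'(x)/(1-s(x)))(s(x)-v) ≤ 0, where A^v = (1/2)d²/dx² + (rx + d + 1_{v=1}s'/s - 1_{v=0}s'/(1-s))d/dx. -/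
open MeasureTheory Real Filter Set Topology

private lemma aux_tendsto_lin_exp (a b : ℝ) :
    Filter.Tendsto (fun x : ℝ => (a * x + b) * Real.exp x) Filter.atBot (nhds 0) := by
  have hA : Tendsto (fun t : ℝ => t * exp (-t)) atTop (𝓝 0) := by
    simpa using tendsto_pow_mul_exp_neg_atTop_nhds_zero 1
  have hB : Tendsto (fun t : ℝ => exp (-t)) atTop (𝓝 0) := tendsto_exp_neg_atTop_nhds_zero
  have h1 : Tendsto (fun t : ℝ => (-a) * (t * exp (-t)) + b * exp (-t)) atTop
      (𝓝 ((-a) * 0 + b * 0)) := (hA.const_mul (-a)).add (hB.const_mul b)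
  rw [show (-a) * (0:ℝ) + b * 0 = 0 by ring] at h1
  have h2 : Tendsto (fun t : ℝ => (a * (-t) + b) * exp (-t)) atTop (𝓝 0) :=
    h1.congr (fun t => by ring)
  have h3 := h2.comp tendsto_neg_atBot_atTop
  exact h3.congr (fun x => by simp [Function.comp, neg_neg])

private lemma aux_integral_Ioi_split {f : ℝ → ℝ} {a b : ℝ} (hab : a ≤ b)
    (ha : IntegrableOn f (Set.Ioi a)) :
    ∫ t in Set.Ioi a, f t = (∫ t in a..b, f t) + ∫ t in Set.Ioi b, f t := by
  rw [intervalIntegral.integral_of_le hab,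
    ← setIntegral_union (Set.Ioc_disjoint_Ioi le_rfl) measurableSet_Ioi
      (ha.mono_set Set.Ioc_subset_Ioi_self) (ha.mono_set (Set.Ioi_subset_Ioi hab)),
    Set.Ioc_union_Ioi_eq_Ioi hab]

private lemma aux_integral_Ioi_split' {f : ℝ → ℝ} {a b : ℝ}
    (ha : IntegrableOn f (Set.Ioi a)) (hb : IntegrableOn f (Set.Ioi b)) :
    ∫ t in Set.Ioi a, f t = (∫ t in a..b, f t) + ∫ t in Set.Ioi b, f t := by
  rcases le_total a b with h | h
  · exact aux_integral_Ioi_split h ha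
  · have h2 := aux_integral_Ioi_split h hb
    rw [intervalIntegral.integral_symm]
    linarith

/-- For `v ∈ {0,1}` the value function `J` (with `J(x) = ∫_{-∞}^x s(y) dy` for
`v = 0` and `J(x) = ∫_x^∞ (1-s(y)) dy` for `v = 1`) is `r`-excessive for the
`h`-transformed OU generator:
`A^v J - rJ = (1_{v=1} s'/s - 1_{v=0} s'/(1-s))(s - v) ≤ 0`, where
`A^v = (1/2)d²/dx² + (rx + d + 1_{v=1}s'/s - 1_{v=0}s'/(1-s))d/dx`. -/
theorem stmt_19 (r d v : ℝ) (hr : 0 < r) (hv : v = 0 ∨ v = 1)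
    (s : ℝ → ℝ)
    (hs : ∀ x, s x = Real.sqrt (r / Real.pi) *
      ∫ y in Set.Iic x, Real.exp (-(r * (y + d / r) ^ 2)))
    (J : ℝ → ℝ)
    (hJ : ∀ x, J x = if v = 1 then ∫ y in Set.Ici x, (1 - s y)
      else ∫ y in Set.Iic x, s y) :
    ∀ x,
      (1 / 2) * deriv (deriv J) x
        + (r * x + d + (if v = 1 then deriv s x / s x else 0)
            - (if v = 0 then deriv s x / (1 - s x) else 0)) * deriv J x
        - r * J x
      = ((if v = 1 then deriv s x / s x else 0)
          - (if v = 0 then deriv s x / (1 - s x) else 0)) * (s x - v) ∧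
      ((if v = 1 then deriv s x / s x else 0)
          - (if v = 0 then deriv s x / (1 - s x) else 0)) * (s x - v) ≤ 0 := by
  set c : ℝ := Real.sqrt (r / Real.pi) with hcdef
  set g : ℝ → ℝ := fun y => Real.exp (-(r * (y + d / r) ^ 2)) with hgdef
  have hc : 0 < c := Real.sqrt_pos.2 (div_pos hr Real.pi_pos)
  have hgpos : ∀ y, 0 < g y := fun y => Real.exp_pos _
  have hgint : Integrable g := by
    simpa [neg_mul] using (integrable_exp_neg_mul_sq hr).comp_add_right (d / r)
  have hgcont : Continuous g := by fun_prop
  have hgtotal : ∫ y, g y = Real.sqrt (Real.pi / r) := by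
    have h1 : ∫ y : ℝ, Real.exp (-(r * y ^ 2)) = Real.sqrt (Real.pi / r) := by
      simpa [neg_mul] using integral_gaussian r
    have h2 := integral_add_right_eq_self (μ := volume)
      (fun y : ℝ => Real.exp (-(r * y ^ 2))) (d / r)
    rw [hgdef, ← h1, ← h2]
  have hone : c * Real.sqrt (Real.pi / r) = 1 := by
    rw [hcdef, ← Real.sqrt_mul (by positivity : (0:ℝ) ≤ r / Real.pi),
      show r / Real.pi * (Real.pi / r) = 1 by
        field_simp]
    exact Real.sqrt_one
  have hsderiv : ∀ x, HasDerivAt s (c * g x) x := by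
    intro x
    have h0 : HasDerivAt (fun u => ∫ t in (0:ℝ)..u, g t) (g x) x :=
      intervalIntegral.integral_hasDerivAt_right (hgint.intervalIntegrable)
        (hgcont.stronglyMeasurableAtFilter _ _) hgcont.continuousAt
    have heq : s = fun u => c * ((∫ t in Set.Iic (0:ℝ), g t) + ∫ t in (0:ℝ)..u, g t) := by
      funext u
      rw [hs u, ← intervalIntegral.integral_Iic_sub_Iic hgint.integrableOn hgint.integrableOn]
      ring_nf
    rw [heq]
    exact (h0.const_add _).const_mul c
  have hscont : Continuous s := continuous_iff_continuousAt.2 fun x => (hsderiv x).continuousAt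
  have hIicpos : ∀ x, 0 < ∫ y in Set.Iic x, g y := by
    intro x
    refine (setIntegral_pos_iff_support_of_nonneg_ae
      (Filter.Eventually.of_forall fun y => (hgpos y).le) hgint.integrableOn).2 ?_
    have hsupp : Function.support g = Set.univ := Set.eq_univ_of_forall fun y => (hgpos y).ne'
    rw [hsupp, Set.univ_inter]
    simp [Real.volume_Iic]
  have hIoipos : ∀ x, 0 < ∫ y in Set.Ioi x, g y := by
    intro x
    refine (setIntegral_pos_iff_support_of_nonneg_ae
      (Filter.Eventually.of_forall fun y => (hgpos y).le) hgint.integrableOn).2 ?_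
    have hsupp : Function.support g = Set.univ := Set.eq_univ_of_forall fun y => (hgpos y).ne'
    rw [hsupp, Set.univ_inter]
    simp [Real.volume_Ioi]
  have hspos : ∀ x, 0 < s x := fun x => by rw [hs x]; exact mul_pos hc (hIicpos x)
  have hsplit : ∀ x : ℝ, (∫ y in Set.Iic x, g y) + ∫ y in Set.Ioi x, g y = ∫ y, g y :=
    fun x => intervalIntegral.integral_Iic_add_Ioi hgint.integrableOn hgint.integrableOn
  have hslt : ∀ x, s x < 1 := by
    intro x
    rw [hs x, ← hone, ← hgtotal, ← hsplit x]
    have := hIoipos x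
    nlinarith [hIicpos x]
  have hone_sub : ∀ x, 1 - s x = c * ∫ y in Set.Ioi x, g y := by
    intro x
    rw [hs x, ← hone, ← hgtotal, ← hsplit x]
    ring
  have hexp1 : ∀ u : ℝ, Real.exp (-(r * u ^ 2)) ≤ Real.exp (1 / (4 * r)) * Real.exp u := by
    intro u
    rw [← Real.exp_add]
    apply Real.exp_le_exp.2
    rw [← sub_le_iff_le_add, le_div_iff₀ (by positivity : (0:ℝ) < 4 * r)]
    nlinarith [sq_nonneg (2 * r * u + 1)]
  have hexp2 : ∀ u : ℝ, Real.exp (-(r * u ^ 2)) ≤ Real.exp (1 / (4 * r)) * Real.exp (-u) := by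
    intro u
    rw [← Real.exp_add]
    apply Real.exp_le_exp.2
    rw [← sub_le_iff_le_add, le_div_iff₀ (by positivity : (0:ℝ) < 4 * r)]
    nlinarith [sq_nonneg (2 * r * u - 1)]
  -- integrability of the comparison exponentials
  have hexpIic : ∀ x : ℝ, IntegrableOn (fun t => Real.exp (1/(4*r)) * Real.exp (t + d / r)) (Set.Iic x) := by
    intro x
    have h1 : IntegrableOn (fun t : ℝ => Real.exp (t + d / r)) (Set.Iic x) := by
      have h0 := (integrableOn_exp_Iic x).mul_const (Real.exp (d / r))
      simp only [← Real.exp_add] at h0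
      exact h0
    exact h1.const_mul _
  have hexpIoi : ∀ x : ℝ, IntegrableOn (fun t => Real.exp (1/(4*r)) * Real.exp (-(t + d / r))) (Set.Ioi x) := by
    intro x
    have h0 : IntegrableOn (fun t : ℝ => Real.exp (-t)) (Set.Ioi x) := by
      simpa [neg_one_mul] using exp_neg_integrableOn_Ioi x (one_pos)
    have h1 : IntegrableOn (fun t : ℝ => Real.exp (-(t + d / r))) (Set.Ioi x) := by
      have h2 : (fun t : ℝ => Real.exp (-(t + d / r)))
          = fun t : ℝ => Real.exp (-t) * Real.exp (-(d / r)) := by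
        funext t; rw [← Real.exp_add]; ring_nf
      rw [h2]
      exact h0.mul_const _
    exact h1.const_mul _
  have hintIic : ∀ x : ℝ, ∫ t in Set.Iic x, Real.exp (1/(4*r)) * Real.exp (t + d / r)
      = Real.exp (1/(4*r)) * Real.exp (x + d / r) := by
    intro x
    rw [MeasureTheory.integral_const_mul]
    congr 1
    simp_rw [Real.exp_add]
    rw [MeasureTheory.integral_mul_const, integral_exp_Iic, ← Real.exp_add]
  have hintIoi : ∀ x : ℝ, ∫ t in Set.Ioi x, Real.exp (1/(4*r)) * Real.exp (-(t + d / r))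
      = Real.exp (1/(4*r)) * Real.exp (-(x + d / r)) := by
    intro x
    rw [MeasureTheory.integral_const_mul]
    congr 1
    simp_rw [neg_add, Real.exp_add]
    rw [MeasureTheory.integral_mul_const, integral_exp_neg_Ioi, ← Real.exp_add, ← neg_add]
  have hsle : ∀ y, s y ≤ c * Real.exp (1/(4*r)) * Real.exp (y + d / r) := by
    intro y
    rw [hs y]
    have hmono : (∫ t in Set.Iic y, g t) ≤ ∫ t in Set.Iic y, Real.exp (1/(4*r)) * Real.exp (t + d / r) := by
      refine setIntegral_mono_on hgint.integrableOn (hexpIic y) measurableSet_Iic ?_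
      intro t _
      exact hexp1 (t + d / r)
    calc c * ∫ t in Set.Iic y, g t ≤ c * ∫ t in Set.Iic y, Real.exp (1/(4*r)) * Real.exp (t + d / r) :=
          mul_le_mul_of_nonneg_left hmono hc.le
      _ = c * Real.exp (1/(4*r)) * Real.exp (y + d / r) := by rw [hintIic y]; ring
  have h1sle : ∀ y, 1 - s y ≤ c * Real.exp (1/(4*r)) * Real.exp (-(y + d / r)) := by
    intro y
    rw [hone_sub y]
    have hmono : (∫ t in Set.Ioi y, g t) ≤ ∫ t in Set.Ioi y, Real.exp (1/(4*r)) * Real.exp (-(t + d / r)) := by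
      refine setIntegral_mono_on hgint.integrableOn (hexpIoi y) measurableSet_Ioi ?_
      intro t _
      exact hexp2 (t + d / r)
    calc c * ∫ t in Set.Ioi y, g t ≤ c * ∫ t in Set.Ioi y, Real.exp (1/(4*r)) * Real.exp (-(t + d / r)) :=
          mul_le_mul_of_nonneg_left hmono hc.le
      _ = c * Real.exp (1/(4*r)) * Real.exp (-(y + d / r)) := by rw [hintIoi y]; ring
  have hs_intOn : ∀ x : ℝ, IntegrableOn s (Set.Iic x) := by
    intro x
    refine Integrable.mono' ((hexpIic x).const_mul c) (hscont.aestronglyMeasurable.restrict)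
      (Filter.Eventually.of_forall fun y => ?_)
    rw [Real.norm_eq_abs, abs_of_pos (hspos y)]
    calc s y ≤ c * Real.exp (1/(4*r)) * Real.exp (y + d / r) := hsle y
      _ = c * (Real.exp (1/(4*r)) * Real.exp (y + d / r)) := by ring
  have h1s_intOn : ∀ x : ℝ, IntegrableOn (fun y => 1 - s y) (Set.Ioi x) := by
    intro x
    refine Integrable.mono' ((hexpIoi x).const_mul c)
      ((continuous_const.sub hscont).aestronglyMeasurable.restrict)
      (Filter.Eventually.of_forall fun y => ?_)
    rw [Real.norm_eq_abs, abs_of_pos (by linarith [hslt y] : (0:ℝ) < 1 - s y)]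
    calc 1 - s y ≤ c * Real.exp (1/(4*r)) * Real.exp (-(y + d / r)) := h1sle y
      _ = c * (Real.exp (1/(4*r)) * Real.exp (-(y + d / r))) := by ring
  have hgderiv : ∀ y, HasDerivAt g (g y * (-(2 * (r * y + d)))) y := by
    intro y
    have h1 : HasDerivAt (fun t : ℝ => t + d / r) 1 y := (hasDerivAt_id y).add_const _
    have h4 := (((h1.pow 2).const_mul r).neg).exp
    refine h4.congr_deriv ?_
    simp only [hgdef, Pi.neg_apply, Pi.pow_apply]
    norm_num
    field_simp
  have key0 : ∀ x, r * (∫ t in Set.Iic x, s t) = 1/2 * (c * g x) + (r * x + d) * s x := by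
    intro x
    set F : ℝ → ℝ := fun y => 1/2 * (c * g y) + (r * y + d) * s y with hFdef
    have hF : ∀ y, HasDerivAt F (r * s y) y := by
      intro y
      have h1 : HasDerivAt (fun t : ℝ => r * t + d) (r * 1) y :=
        ((hasDerivAt_id y).const_mul r).add_const d
      have h4 := (((hgderiv y).const_mul c).const_mul (1/2 : ℝ)).add (h1.mul (hsderiv y))
      refine h4.congr_deriv ?_
      ring
    have hfint : ∀ a : ℝ, ∫ t in a..x, r * s t = F x - F a := fun a =>
      intervalIntegral.integral_eq_sub_of_hasDerivAt (fun t _ => hF t)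
        ((continuous_const.mul hscont).intervalIntegrable _ _)
    have hT1 : Tendsto (fun a => ∫ t in a..x, r * s t) atBot (𝓝 (∫ t in Set.Iic x, r * s t)) :=
      intervalIntegral_tendsto_integral_Iic x ((hs_intOn x).const_mul r) tendsto_id
    have hT2a : Tendsto (fun a : ℝ => Real.exp (a + d / r)) atBot (𝓝 0) :=
      tendsto_exp_atBot.comp (tendsto_atBot_add_const_right _ _ tendsto_id)
    have hb1 : Tendsto (fun a : ℝ => 1/2 * (c * g a)) atBot (𝓝 0) := by
      refine squeeze_zero_norm
        (a := fun a => 1/2 * (c * (Real.exp (1/(4*r)) * Real.exp (a + d/r)))) (fun a => ?_) ?_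
      · rw [Real.norm_eq_abs, abs_of_pos (by positivity : (0:ℝ) < 1/2 * (c * g a))]
        exact mul_le_mul_of_nonneg_left
          (mul_le_mul_of_nonneg_left (hexp1 _) hc.le) (by norm_num)
      · simpa using ((hT2a.const_mul (Real.exp (1/(4*r)))).const_mul c).const_mul (1/2 : ℝ)
    have hb2 : Tendsto (fun a : ℝ => (r * a + d) * s a) atBot (𝓝 0) := by
      refine squeeze_zero_norm'
        (a := fun a => (c * Real.exp (1/(4*r)) * Real.exp (d/r)) * (((-r) * a + (-d)) * Real.exp a))
        ?_ ?_
      · filter_upwards [eventually_le_atBot (-(d/r))] with a ha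
        have hle : r * a + d ≤ 0 := by
          have : r * a ≤ r * (-(d/r)) := mul_le_mul_of_nonneg_left ha hr.le
          rw [mul_neg, mul_div_cancel₀ _ hr.ne'] at this
          linarith
        rw [Real.norm_eq_abs, abs_mul, abs_of_pos (hspos a), abs_of_nonpos hle]
        calc -(r * a + d) * s a ≤ -(r * a + d) * (c * Real.exp (1/(4*r)) * Real.exp (a + d/r)) :=
              mul_le_mul_of_nonneg_left (hsle a) (by linarith)
          _ = (c * Real.exp (1/(4*r)) * Real.exp (d/r)) * (((-r) * a + (-d)) * Real.exp a) := by
              rw [Real.exp_add]; ring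
      · simpa using (aux_tendsto_lin_exp (-r) (-d)).const_mul
          (c * Real.exp (1/(4*r)) * Real.exp (d/r))
    have hT2 : Tendsto F atBot (𝓝 0) := by
      have h := hb1.add hb2
      rw [add_zero] at h
      exact h
    have hT3 : Tendsto (fun a => F x - ∫ t in a..x, r * s t) atBot
        (𝓝 (F x - ∫ t in Set.Iic x, r * s t)) := tendsto_const_nhds.sub hT1
    have h0 : F x - ∫ t in Set.Iic x, r * s t = 0 :=
      tendsto_nhds_unique (hT3.congr (fun a => by rw [hfint a]; ring)) hT2
    have h1 : ∫ t in Set.Iic x, r * s t = r * ∫ t in Set.Iic x, s t :=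
      MeasureTheory.integral_const_mul r s
    rw [h1] at h0
    have hFx : F x = 1/2 * (c * g x) + (r * x + d) * s x := rfl
    linear_combination hFx - h0
  have key1 : ∀ x, r * (∫ t in Set.Ici x, (1 - s t))
      = 1/2 * (c * g x) + (r * x + d) * (s x - 1) := by
    intro x
    set G : ℝ → ℝ := fun y => 1/2 * (c * g y) + (r * y + d) * (s y - 1) with hGdef
    have hG : ∀ y, HasDerivAt G (r * (s y - 1)) y := by
      intro y
      have h1 : HasDerivAt (fun t : ℝ => r * t + d) (r * 1) y :=
        ((hasDerivAt_id y).const_mul r).add_const d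
      have h4 := (((hgderiv y).const_mul c).const_mul (1/2 : ℝ)).add
        (h1.mul ((hsderiv y).sub_const 1))
      refine h4.congr_deriv ?_
      ring
    have hcont1 : Continuous (fun t => r * (s t - 1)) :=
      continuous_const.mul (hscont.sub continuous_const)
    have hfint : ∀ a : ℝ, ∫ t in x..a, r * (s t - 1) = G a - G x := fun a =>
      intervalIntegral.integral_eq_sub_of_hasDerivAt (fun t _ => hG t)
        (hcont1.intervalIntegrable _ _)
    have hfunrw : (fun t => r * (s t - 1)) = fun t => (-r) * (1 - s t) :=
      funext fun t => by ring
    have hint : IntegrableOn (fun t => r * (s t - 1)) (Set.Ioi x) := by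
      rw [hfunrw]; exact (h1s_intOn x).const_mul (-r)
    have hT1 : Tendsto (fun a => ∫ t in x..a, r * (s t - 1)) atTop
        (𝓝 (∫ t in Set.Ioi x, r * (s t - 1))) :=
      intervalIntegral_tendsto_integral_Ioi x hint tendsto_id
    have hT2a : Tendsto (fun a : ℝ => Real.exp (-(a + d / r))) atTop (𝓝 0) :=
      tendsto_exp_atBot.comp
        (tendsto_neg_atTop_atBot.comp (tendsto_atTop_add_const_right _ _ tendsto_id))
    have hb1 : Tendsto (fun a : ℝ => 1/2 * (c * g a)) atTop (𝓝 0) := by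
      refine squeeze_zero_norm
        (a := fun a => 1/2 * (c * (Real.exp (1/(4*r)) * Real.exp (-(a + d/r))))) (fun a => ?_) ?_
      · rw [Real.norm_eq_abs, abs_of_pos (by positivity : (0:ℝ) < 1/2 * (c * g a))]
        exact mul_le_mul_of_nonneg_left
          (mul_le_mul_of_nonneg_left (hexp2 _) hc.le) (by norm_num)
      · simpa using ((hT2a.const_mul (Real.exp (1/(4*r)))).const_mul c).const_mul (1/2 : ℝ)
    have hb2 : Tendsto (fun a : ℝ => (r * a + d) * (s a - 1)) atTop (𝓝 0) := by
      refine squeeze_zero_norm'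
        (a := fun a => (c * Real.exp (1/(4*r)) * Real.exp (-(d/r))) * ((r * a + d) * Real.exp (-a)))
        ?_ ?_
      · filter_upwards [eventually_ge_atTop (-(d/r))] with a ha
        have hge : 0 ≤ r * a + d := by
          have : r * (-(d/r)) ≤ r * a := mul_le_mul_of_nonneg_left ha hr.le
          rw [mul_neg, mul_div_cancel₀ _ hr.ne'] at this
          linarith
        rw [Real.norm_eq_abs, abs_mul, abs_of_nonneg hge,
          abs_of_neg (by linarith [hslt a] : s a - 1 < 0)]
        calc (r * a + d) * -(s a - 1)
            ≤ (r * a + d) * (c * Real.exp (1/(4*r)) * Real.exp (-(a + d/r))) := by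
              have := h1sle a
              exact mul_le_mul_of_nonneg_left (by linarith) hge
          _ = (c * Real.exp (1/(4*r)) * Real.exp (-(d/r))) * ((r * a + d) * Real.exp (-a)) := by
              rw [show -(a + d/r) = -a + -(d/r) by ring, Real.exp_add]; ring
      · have h5 := (aux_tendsto_lin_exp (-r) d).comp tendsto_neg_atTop_atBot
        have h6 : Tendsto (fun a : ℝ => (r * a + d) * Real.exp (-a)) atTop (𝓝 0) :=
          h5.congr (fun a => by simp only [Function.comp_apply]; ring_nf)
        simpa using h6.const_mul (c * Real.exp (1/(4*r)) * Real.exp (-(d/r)))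
    have hGt : Tendsto G atTop (𝓝 0) := by
      have h := hb1.add hb2
      rw [add_zero] at h
      exact h
    have h0 : ∫ t in Set.Ioi x, r * (s t - 1) = 0 - G x :=
      tendsto_nhds_unique hT1 ((hGt.sub_const (G x)).congr (fun a => (hfint a).symm))
    have h1 : ∫ t in Set.Ioi x, r * (s t - 1) = (-r) * ∫ t in Set.Ioi x, (1 - s t) := by
      rw [hfunrw, MeasureTheory.integral_const_mul]
    have h2 : ∫ t in Set.Ici x, (1 - s t) = ∫ t in Set.Ioi x, (1 - s t) :=
      MeasureTheory.integral_Ici_eq_integral_Ioi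
    have hGx : G x = 1/2 * (c * g x) + (r * x + d) * (s x - 1) := rfl
    rw [h2]
    linear_combination hGx - h0 + h1
  intro x
  have hds : deriv s x = c * g x := (hsderiv x).deriv
  rcases hv with rfl | rfl
  · -- v = 0
    have hv1 : ¬((0:ℝ) = 1) := by norm_num
    have hJeq : J = fun u => (∫ t in Set.Iic (0:ℝ), s t) + ∫ t in (0:ℝ)..u, s t := by
      funext u
      rw [hJ u, if_neg hv1,
        ← intervalIntegral.integral_Iic_sub_Iic (hs_intOn 0) (hs_intOn u)]
      ring
    have hJd : ∀ u, HasDerivAt J (s u) u := by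
      intro u
      rw [hJeq]
      exact (intervalIntegral.integral_hasDerivAt_right (hscont.intervalIntegrable _ _)
        (hscont.stronglyMeasurableAtFilter _ _) hscont.continuousAt).const_add _
    have hderivJ : deriv J = s := funext fun u => (hJd u).deriv
    have h2d : deriv (deriv J) x = c * g x := by rw [hderivJ]; exact (hsderiv x).deriv
    have hrJ : r * J x = 1/2 * (c * g x) + (r * x + d) * s x := by
      rw [hJ x, if_neg hv1]; exact key0 x
    simp only [if_neg hv1, eq_self_iff_true, if_true]
    rw [h2d, hds, hderivJ]
    constructor
    · linear_combination (-1 : ℝ) * hrJ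
    · have h1 : 0 < 1 - s x := by linarith [hslt x]
      have h2 : 0 ≤ c * g x / (1 - s x) := div_nonneg (by positivity) h1.le
      nlinarith [hspos x, mul_nonneg h2 (hspos x).le]
  · -- v = 1
    have hv0 : ¬((1:ℝ) = 0) := one_ne_zero
    have hJeq : J = fun u =>
        -(∫ t in (0:ℝ)..u, (1 - s t)) + ∫ t in Set.Ioi (0:ℝ), (1 - s t) := by
      funext u
      rw [hJ u, if_pos rfl, MeasureTheory.integral_Ici_eq_integral_Ioi,
        aux_integral_Ioi_split' (h1s_intOn u) (h1s_intOn 0),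
        intervalIntegral.integral_symm]
    have hJd : ∀ u, HasDerivAt J (s u - 1) u := by
      intro u
      rw [hJeq]
      have h0 : HasDerivAt (fun w => ∫ t in (0:ℝ)..w, (1 - s t)) (1 - s u) u :=
        intervalIntegral.integral_hasDerivAt_right
          ((continuous_const.sub hscont).intervalIntegrable _ _)
          ((continuous_const.sub hscont).stronglyMeasurableAtFilter _ _)
          (continuous_const.sub hscont).continuousAt
      have h := (h0.neg).add_const (∫ t in Set.Ioi (0:ℝ), (1 - s t))
      refine h.congr_deriv ?_
      ring
    have hderivJ : deriv J = fun u => s u - 1 := funext fun u => (hJd u).deriv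
    have h2d : deriv (deriv J) x = c * g x := by
      rw [hderivJ]; exact ((hsderiv x).sub_const 1).deriv
    have hrJ : r * J x = 1/2 * (c * g x) + (r * x + d) * (s x - 1) := by
      rw [hJ x, if_pos rfl]; exact key1 x
    simp only [if_neg hv0, eq_self_iff_true, if_true]
    rw [h2d, hds, hderivJ]
    constructor
    · linear_combination (-1 : ℝ) * hrJ
    · have h2 : 0 ≤ c * g x / s x := div_nonneg (by positivity) (hspos x).le
      nlinarith [hslt x, mul_nonneg h2 (by linarith [hslt x] : (0:ℝ) ≤ 1 - s x)]
end
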